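/- If x and y are reordered computable real numbers, then the product x · y is reordered computable. -/

import Mathlib

open Filter

/-- A function `f : ℕ → ℕ` tends to infinity. -/
def TendsToInfinity (f : ℕ → ℕ) : Prop := ∀ c : ℕ, ∃ m : ℕ, ∀ k ≥ m, c < f k

/-- `uf f n` is the number of `k` with `f k = n`. -/
noncomputable def uf (f : ℕ → ℕ) (n : ℕ) : ℕ := Nat.card {k : ℕ | f k = n}

/-- A series of reals converges computably: it has a limit together with a computable
modulus of convergence for the sequence of partial sums. -/
def ConvergesComputably (a : ℕ → ℝ) : Prop :=
  ∃ (x : ℝ) (s : ℕ → ℕ), Computable s ∧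
    ∀ n : ℕ, ∀ m ≥ s n, |x - ∑ k ∈ Finset.range m, a k| ≤ (2:ℝ)^(-(n:ℤ))

/-- `f` is a name for `x` if `∑_k 2^{-f k} = x`. -/
def IsName (f : ℕ → ℕ) (x : ℝ) : Prop := HasSum (fun k => (2:ℝ)^(-(f k : ℤ))) x

/-- A real is reordered computable if it has a computable name `f` such that
`∑_k (uf f k)·2^{-k}` converges computably. -/
def ReorderedComputable (x : ℝ) : Prop :=
  ∃ f : ℕ → ℕ, Computable f ∧ IsName f x ∧
    ConvergesComputably (fun k => (uf f k : ℝ) * (2:ℝ)^(-(k:ℤ)))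

/-- A real is left-computable if some computable strictly increasing sequence of
rationals converges to it. -/
def LeftComputable (x : ℝ) : Prop :=
  ∃ q : ℕ → ℚ, Computable q ∧ StrictMono q ∧
    Tendsto (fun n => (q n : ℝ)) atTop (nhds x)

/-- A real is computably approximable if some computable sequence of rationals
converges to it. -/
def ComputablyApproximable (x : ℝ) : Prop :=
  ∃ q : ℕ → ℚ, Computable q ∧ Tendsto (fun n => (q n : ℝ)) atTop (nhds x)

/-- A real is computable if some computable sequence of rationals approximates it
with error at most `2^{-n}`. -/
def ComputableReal (x : ℝ) : Prop :=
  ∃ q : ℕ → ℚ, Computable q ∧ ∀ n : ℕ, |x - (q n : ℝ)| ≤ (2:ℝ)^(-(n:ℤ))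

/-- Solovay reducibility on left-computable reals. -/
def SolovayReducible (x y : ℝ) : Prop :=
  ∀ yq : ℕ → ℚ, Computable yq → StrictMono yq →
    Tendsto (fun n => (yq n : ℝ)) atTop (nhds y) →
    ∃ xq : ℕ → ℚ, Computable xq ∧ StrictMono xq ∧
      Tendsto (fun n => (xq n : ℝ)) atTop (nhds x) ∧
      ∃ c : ℝ, 0 < c ∧ ∀ n : ℕ, x - (xq n : ℝ) ≤ c * (y - (yq n : ℝ))

/-- A set of naturals is computably enumerable: empty or the range of a computable function. -/
def CE (A : Set ℕ) : Prop := A = ∅ ∨ ∃ f : ℕ → ℕ, Computable f ∧ A = Set.range f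

/-- `xA A = ∑_{n ∈ A} 2^{-(n+1)}`. -/
noncomputable def xA (A : Set ℕ) : ℝ := ∑' n : A, (2:ℝ)^(-((n : ℕ) : ℤ) - 1)

/-- A real is strongly left-computable if it equals `xA A` for a c.e. set `A`. -/
def StronglyLeftComputable (x : ℝ) : Prop := ∃ A : Set ℕ, CE A ∧ xA A = x

/-- A real is regular if it is a finite sum of strongly left-computable reals. -/
def Regular (x : ℝ) : Prop :=
  ∃ (n : ℕ) (s : Fin n → ℝ), (∀ i, StronglyLeftComputable (s i)) ∧ (∑ i, s i) = x

/-- An infinite set of naturals is immune if it has no infinite c.e. subset. -/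
def Immune (A : Set ℕ) : Prop :=
  A.Infinite ∧ ∀ B : Set ℕ, B ⊆ A → B.Infinite → ¬ CE B

/-- A real is nearly computable if some computable sequence of rationals converges to it
such that along every computable strictly increasing function the consecutive differences
converge with a computable modulus of convergence. -/
def NearlyComputable (x : ℝ) : Prop :=
  ∃ q : ℕ → ℚ, Computable q ∧ Tendsto (fun n => (q n : ℝ)) atTop (nhds x) ∧
    ∀ s : ℕ → ℕ, Computable s → StrictMono s →
      ∃ (L : ℝ) (m : ℕ → ℕ), Computable m ∧
        ∀ n : ℕ, ∀ k ≥ m n, |((q (s (k+1)) : ℝ) - (q (s k) : ℝ)) - L| ≤ (2:ℝ)^(-(n:ℤ))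

/-- A real is regainingly approximable if some computable strictly increasing sequence of
rationals converges to it and comes `2^{-n}`-close infinitely often. -/
def RegaininglyApproximable (x : ℝ) : Prop :=
  ∃ q : ℕ → ℚ, Computable q ∧ StrictMono q ∧
    Tendsto (fun n => (q n : ℝ)) atTop (nhds x) ∧
    ∀ m : ℕ, ∃ n ≥ m, x - (q n : ℝ) ≤ (2:ℝ)^(-(n:ℤ))

/-- `limsup_n (a n)^{1/n}`, computed in the extended nonnegative reals. -/
noncomputable def rootLimsup (a : ℕ → ℕ) : ENNReal :=
  Filter.limsup (fun n => (a n : ENNReal) ^ (1 / (n:ℝ))) Filter.atTop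

/-- The characteristic dyadic value of `x`: the infimum of `rootLimsup (uf f)` over all
computable names `f` for `x`. -/
noncomputable def varsigma (x : ℝ) : ENNReal :=
  ⨅ (f : ℕ → ℕ) (_ : Computable f ∧ IsName f x), rootLimsup (uf f)

set_option maxHeartbeats 1000000

-- auxiliary lemmas

lemma two_zpow_neg_eq (n : ℕ) : (2:ℝ)^(-(n:ℤ)) = (1/2:ℝ)^n := by
  rw [one_div, inv_pow, ← zpow_natCast (2:ℝ) n, ← zpow_neg]

lemma aux_preimage_finite {f : ℕ → ℕ} {x : ℝ} (h : IsName f x) (n : ℕ) :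
    {k | f k = n}.Finite := by
  by_contra hinf
  have hinf' : {k | f k = n}.Infinite := hinf
  have h0 : Tendsto (fun k => (2:ℝ)^(-(f k : ℤ))) atTop (nhds 0) :=
    h.summable.tendsto_atTop_zero
  have hpos : (0:ℝ) < (2:ℝ)^(-(n:ℤ)) := by positivity
  have h2 := h0.eventually_lt_const hpos
  obtain ⟨m, hm⟩ := eventually_atTop.mp h2
  obtain ⟨k, hk, hkm⟩ := hinf'.exists_gt m
  have := hm k hkm.le
  rw [Set.mem_setOf_eq] at hk
  rw [hk] at this
  exact lt_irrefl _ this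

lemma aux_uf_conv {f g : ℕ → ℕ} (hf : ∀ a, {k | f k = a}.Finite)
    (hg : ∀ a, {k | g k = a}.Finite) (n : ℕ) :
    uf (fun m => f m.unpair.1 + g m.unpair.2) n
      = ∑ i ∈ Finset.range (n+1), uf f i * uf g (n - i) := by
  classical
  set h : ℕ → ℕ := fun m => f m.unpair.1 + g m.unpair.2 with hh
  set A : ℕ → Finset ℕ := fun a => (hf a).toFinset with hA
  set B : ℕ → Finset ℕ := fun a => (hg a).toFinset with hB
  have hufA : ∀ a, uf f a = (A a).card := fun a => by
    rw [uf, Nat.card_coe_set_eq, Set.ncard_eq_toFinset_card _ (hf a)]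
  have hufB : ∀ a, uf g a = (B a).card := fun a => by
    rw [uf, Nat.card_coe_set_eq, Set.ncard_eq_toFinset_card _ (hg a)]
  set T : Finset (ℕ × ℕ) := (Finset.range (n+1)).biUnion (fun i => A i ×ˢ B (n - i)) with hT
  set S : Finset ℕ := T.image (fun q => Nat.pair q.1 q.2) with hS
  have hTmem : ∀ q : ℕ × ℕ, q ∈ T ↔ f q.1 + g q.2 = n := by
    intro q
    simp only [hT, Finset.mem_biUnion, Finset.mem_range, Finset.mem_product, hA, hB,
      Set.Finite.mem_toFinset, Set.mem_setOf_eq]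
    constructor
    · rintro ⟨i, hi, hfi, hgi⟩; omega
    · intro hq; exact ⟨f q.1, by omega, rfl, by omega⟩
  have hset : {k | h k = n} = ↑S := by
    ext k
    simp only [Set.mem_setOf_eq, hS, Finset.coe_image, Set.mem_image, Finset.mem_coe]
    constructor
    · intro hk
      refine ⟨k.unpair, ?_, Nat.pair_unpair k⟩
      rw [hTmem]; exact hk
    · rintro ⟨q, hq, rfl⟩
      rw [hTmem] at hq
      show f (Nat.pair q.1 q.2).unpair.1 + g (Nat.pair q.1 q.2).unpair.2 = n
      rw [Nat.unpair_pair]; exact hq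
  have hinj : Function.Injective (fun q : ℕ × ℕ => Nat.pair q.1 q.2) := by
    intro q1 q2 hq
    have := congrArg Nat.unpair hq
    simpa [Nat.unpair_pair, Prod.ext_iff] using this
  have h1 : uf h n = S.card := by
    rw [uf, Nat.card_coe_set_eq, hset, Set.ncard_coe_finset]
  have h2 : S.card = T.card := Finset.card_image_of_injective T hinj
  have h3 : T.card = ∑ i ∈ Finset.range (n+1), uf f i * uf g (n - i) := by
    rw [hT, Finset.card_biUnion]
    · refine Finset.sum_congr rfl fun i _ => ?_
      rw [Finset.card_product, hufA, hufB]
    · intro i _ j _ hij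
      rw [Function.onFun, Finset.disjoint_left]
      rintro ⟨a, b⟩ hmem1 hmem2
      simp only [Finset.mem_product, hA, hB, Set.Finite.mem_toFinset, Set.mem_setOf_eq] at hmem1 hmem2
      exact hij (hmem1.1 ▸ hmem2.1.symm ▸ rfl)
  rw [h1, h2, h3]

lemma aux_isname_mul {f g : ℕ → ℕ} {x y : ℝ} (hf : IsName f x) (hg : IsName g y) :
    IsName (fun m => f m.unpair.1 + g m.unpair.2) (x * y) := by
  have hsum : Summable (fun q : ℕ × ℕ => (2:ℝ)^(-(f q.1 : ℤ)) * (2:ℝ)^(-(g q.2 : ℤ))) :=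
    Summable.mul_of_nonneg hf.summable hg.summable (fun k => by positivity) (fun k => by positivity)
  have hmul := HasSum.mul hf hg hsum
  have hkey := (Equiv.hasSum_iff (Nat.pairEquiv.symm)).mpr hmul
  have heq : ((fun q : ℕ × ℕ => (2:ℝ)^(-(f q.1 : ℤ)) * (2:ℝ)^(-(g q.2 : ℤ))) ∘ Nat.pairEquiv.symm)
      = fun m => (2:ℝ)^(-((f m.unpair.1 + g m.unpair.2 : ℕ) : ℤ)) := by
    funext m
    show (2:ℝ)^(-(f m.unpair.1 : ℤ)) * (2:ℝ)^(-(g m.unpair.2 : ℤ)) = _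
    rw [← zpow_add₀ (two_ne_zero)]
    congr 1
    push_cast
    ring
  rw [heq] at hkey
  exact hkey

lemma aux_cauchy (a b : ℕ → ℝ) (ha0 : ∀ k, 0 ≤ a k) (hb0 : ∀ k, 0 ≤ b k)
    (ha : ConvergesComputably a) (hb : ConvergesComputably b) :
    ConvergesComputably (fun n => ∑ i ∈ Finset.range (n+1), a i * b (n - i)) := by
  classical
  obtain ⟨A, sa, hsac, hsa⟩ := ha
  obtain ⟨B, sb, hsbc, hsb⟩ := hb
  set Sa : ℕ → ℝ := fun m => ∑ k ∈ Finset.range m, a k with hSa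
  set Sb : ℕ → ℝ := fun m => ∑ k ∈ Finset.range m, b k with hSb
  have hSamono : Monotone Sa := fun m m' hmm =>
    Finset.sum_le_sum_of_subset_of_nonneg (Finset.range_subset_range.mpr hmm) (fun i _ _ => ha0 i)
  have hSbmono : Monotone Sb := fun m m' hmm =>
    Finset.sum_le_sum_of_subset_of_nonneg (Finset.range_subset_range.mpr hmm) (fun i _ _ => hb0 i)
  have hSaA : ∀ m, Sa m ≤ A := by
    intro m
    apply le_of_forall_pos_le_add
    intro ε hε
    obtain ⟨n, hn⟩ := exists_pow_lt_of_lt_one hε (by norm_num : (1/2:ℝ) < 1)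
    have h2 := hsa n (max m (sa n)) (le_max_right _ _)
    have h3 : Sa m ≤ Sa (max m (sa n)) := hSamono (le_max_left _ _)
    have h4 : Sa (max m (sa n)) - A ≤ (2:ℝ)^(-(n:ℤ)) := by
      have := le_abs_self (Sa (max m (sa n)) - A)
      rw [abs_sub_comm] at this
      linarith
    rw [two_zpow_neg_eq] at h4
    linarith
  have hSbB : ∀ m, Sb m ≤ B := by
    intro m
    apply le_of_forall_pos_le_add
    intro ε hε
    obtain ⟨n, hn⟩ := exists_pow_lt_of_lt_one hε (by norm_num : (1/2:ℝ) < 1)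
    have h2 := hsb n (max m (sb n)) (le_max_right _ _)
    have h3 : Sb m ≤ Sb (max m (sb n)) := hSbmono (le_max_left _ _)
    have h4 : Sb (max m (sb n)) - B ≤ (2:ℝ)^(-(n:ℤ)) := by
      have := le_abs_self (Sb (max m (sb n)) - B)
      rw [abs_sub_comm] at this
      linarith
    rw [two_zpow_neg_eq] at h4
    linarith
  have hSanon : ∀ m, 0 ≤ Sa m := fun m => Finset.sum_nonneg fun i _ => ha0 i
  have hSbnon : ∀ m, 0 ≤ Sb m := fun m => Finset.sum_nonneg fun i _ => hb0 i
  have hA0 : 0 ≤ A := le_trans (hSanon 0) (hSaA 0)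
  have hB0 : 0 ≤ B := le_trans (hSbnon 0) (hSbB 0)
  obtain ⟨C, hC⟩ := exists_nat_ge (max A B)
  have hAC : A ≤ C := le_trans (le_max_left _ _) hC
  have hBC : B ≤ C := le_trans (le_max_right _ _) hC
  refine ⟨A * B, fun n => 2 * max (sa (n + (C+1))) (sb (n + (C+1))), ?_, ?_⟩
  · have h1 : Computable (fun n : ℕ => n + (C+1)) :=
      (Primrec.nat_add.comp Primrec.id (Primrec.const (C+1))).to_comp
    exact (Primrec.nat_mul.to_comp).comp (Computable.const 2)
      ((Primrec.nat_max.to_comp).comp (hsac.comp h1) (hsbc.comp h1))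
  · intro n m hm
    replace hm : 2 * max (sa (n + (C+1))) (sb (n + (C+1))) ≤ m := by simpa using hm
    set j : ℕ := n + (C+1) with hj
    set p : ℕ := max (sa j) (sb j) with hp
    -- sums over biUnion of antidiagonals
    set U : ℕ → Finset (ℕ × ℕ) := fun m => (Finset.range m).biUnion Finset.HasAntidiagonal.antidiagonal with hU
    have hUmem : ∀ m (q : ℕ × ℕ), q ∈ U m ↔ q.1 + q.2 < m := by
      intro m q
      simp only [hU, Finset.mem_biUnion, Finset.mem_range, Finset.HasAntidiagonal.mem_antidiagonal]
      constructor
      · rintro ⟨i, hi, rfl⟩; exact hi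
      · intro hq; exact ⟨q.1 + q.2, hq, rfl⟩
    have hSc : ∀ m, ∑ k ∈ Finset.range m, (∑ i ∈ Finset.range (k+1), a i * b (k - i))
        = ∑ q ∈ U m, a q.1 * b q.2 := by
      intro m
      rw [hU, Finset.sum_biUnion]
      · refine Finset.sum_congr rfl fun k _ => ?_
        rw [Finset.Nat.sum_antidiagonal_eq_sum_range_succ_mk]
      · intro i _ j' _ hij
        rw [Function.onFun, Finset.disjoint_left]
        intro q hq1 hq2
        rw [Finset.HasAntidiagonal.mem_antidiagonal] at hq1 hq2
        omega
    have hsub1 : U m ⊆ Finset.range m ×ˢ Finset.range m := by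
      intro q hq
      rw [hUmem] at hq
      rw [Finset.mem_product, Finset.mem_range, Finset.mem_range]
      omega
    have hsub2 : Finset.range p ×ˢ Finset.range p ⊆ U m := by
      intro q hq
      rw [Finset.mem_product, Finset.mem_range, Finset.mem_range] at hq
      rw [hUmem]
      omega
    have hScm1 : ∑ q ∈ U m, a q.1 * b q.2 ≤ Sa m * Sb m := by
      rw [hSa, hSb, Finset.sum_mul_sum, ← Finset.sum_product']
      exact Finset.sum_le_sum_of_subset_of_nonneg hsub1
        (fun q _ _ => mul_nonneg (ha0 q.1) (hb0 q.2))
    have hScm2 : Sa p * Sb p ≤ ∑ q ∈ U m, a q.1 * b q.2 := by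
      rw [hSa, hSb, Finset.sum_mul_sum, ← Finset.sum_product']
      exact Finset.sum_le_sum_of_subset_of_nonneg hsub2
        (fun q _ _ => mul_nonneg (ha0 q.1) (hb0 q.2))
    have hAB1 : Sa m * Sb m ≤ A * B :=
      mul_le_mul (hSaA m) (hSbB m) (hSbnon m) hA0
    -- estimate A*B - Sa p * Sb p
    have haj : A - Sa p ≤ (2:ℝ)^(-(j:ℤ)) := by
      have := hsa j p (le_max_left _ _)
      have h5 := le_abs_self (A - Sa p)
      linarith
    have hbj : B - Sb p ≤ (2:ℝ)^(-(j:ℤ)) := by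
      have := hsb j p (le_max_right _ _)
      have h5 := le_abs_self (B - Sb p)
      linarith
    set e : ℝ := (2:ℝ)^(-(j:ℤ)) with he
    have he0 : 0 ≤ e := by positivity
    have hest : A * B - Sa p * Sb p ≤ A * e + e * B := by
      have t1 : A * (B - Sb p) ≤ A * e := mul_le_mul_of_nonneg_left hbj hA0
      have t2 : (A - Sa p) * Sb p ≤ e * Sb p := mul_le_mul_of_nonneg_right haj (hSbnon p)
      have t3 : e * Sb p ≤ e * B := mul_le_mul_of_nonneg_left (hSbB p) he0
      nlinarith
    have hkey : A * e + e * B ≤ (2:ℝ)^(-(n:ℤ)) := by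
      have h2C : (2:ℝ) * C ≤ 2^(C+1) := by
        have := Nat.lt_two_pow_self (n := C)
        have : (C:ℝ) ≤ 2^C := by exact_mod_cast this.le
        rw [pow_succ]
        linarith
      have hmul1 : A * e + e * B ≤ 2 * C * e := by nlinarith
      have hpoweq : (2:ℝ)^(C+1) * e = (2:ℝ)^(-(n:ℤ)) := by
        rw [he, ← zpow_natCast (2:ℝ) (C+1), ← zpow_add₀ (two_ne_zero)]
        congr 1
        push_cast
        omega
      have : 2 * (C:ℝ) * e ≤ (2:ℝ)^(C+1) * e := mul_le_mul_of_nonneg_right h2C he0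
      linarith
    -- conclude
    have hScle : ∑ k ∈ Finset.range m, (∑ i ∈ Finset.range (k+1), a i * b (k - i)) ≤ A * B := by
      rw [hSc]; linarith
    have hScge : Sa p * Sb p ≤ ∑ k ∈ Finset.range m, (∑ i ∈ Finset.range (k+1), a i * b (k - i)) := by
      rw [hSc]; exact hScm2
    rw [abs_of_nonneg (by linarith)]
    linarith

lemma aux_cc_congr {a b : ℕ → ℝ} (h : ∀ k, a k = b k) (ha : ConvergesComputably a) :
    ConvergesComputably b := by
  obtain ⟨x, s, hs, hest⟩ := ha
  refine ⟨x, s, hs, fun n m hm => ?_⟩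
  have hsum : ∑ k ∈ Finset.range m, b k = ∑ k ∈ Finset.range m, a k :=
    Finset.sum_congr rfl fun k _ => (h k).symm
  rw [hsum]
  exact hest n m hm

lemma aux_key (F G : ℕ → ℕ) (n : ℕ) :
    ((∑ i ∈ Finset.range (n+1), F i * G (n - i) : ℕ) : ℝ) * (2:ℝ)^(-(n:ℤ))
      = ∑ i ∈ Finset.range (n+1),
          ((F i : ℝ) * (2:ℝ)^(-(i:ℤ))) * ((G (n - i) : ℝ) * (2:ℝ)^(-((n - i : ℕ):ℤ))) := by
  push_cast
  rw [Finset.sum_mul]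
  refine Finset.sum_congr rfl fun i hi => ?_
  rw [Finset.mem_range] at hi
  have h2 : (2:ℝ)^(-(i:ℤ)) * (2:ℝ)^(-((n - i : ℕ):ℤ)) = (2:ℝ)^(-(n:ℤ)) := by
    rw [← zpow_add₀ (two_ne_zero)]
    congr 1
    omega
  rw [← h2]
  ring

/-- reordered computable reals are closed under multiplication. -/
theorem stmt9 (x y : ℝ) (hx : ReorderedComputable x) (hy : ReorderedComputable y) :
    ReorderedComputable (x * y) := by
  obtain ⟨f, hfc, hf1, hf2⟩ := hx
  obtain ⟨g, hgc, hg1, hg2⟩ := hy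
  have hff := aux_preimage_finite hf1
  have hgf := aux_preimage_finite hg1
  have hcomp : Computable (fun m : ℕ => f m.unpair.1 + g m.unpair.2) :=
    (Primrec.nat_add.to_comp).comp
      (hfc.comp ((Primrec.fst.comp Primrec.unpair).to_comp))
      (hgc.comp ((Primrec.snd.comp Primrec.unpair).to_comp))
  have key : ∀ n : ℕ, (uf (fun m => f m.unpair.1 + g m.unpair.2) n : ℝ) * (2:ℝ)^(-(n:ℤ))
      = ∑ i ∈ Finset.range (n+1),
          ((uf f i : ℝ) * (2:ℝ)^(-(i:ℤ))) * ((uf g (n - i) : ℝ) * (2:ℝ)^(-((n - i : ℕ):ℤ))) := by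
    intro n
    rw [aux_uf_conv hff hgf n]
    exact aux_key (uf f) (uf g) n
  have hcauchy : ConvergesComputably (fun n => ∑ i ∈ Finset.range (n+1),
          ((uf f i : ℝ) * (2:ℝ)^(-(i:ℤ))) * ((uf g (n - i) : ℝ) * (2:ℝ)^(-((n - i : ℕ):ℤ)))) :=
    aux_cauchy (fun i => (uf f i : ℝ) * (2:ℝ)^(-(i:ℤ))) (fun i => (uf g i : ℝ) * (2:ℝ)^(-(i:ℤ)))
      (fun k => by positivity) (fun k => by positivity) hf2 hg2
  have hconv : ConvergesComputably
      (fun k => (uf (fun m => f m.unpair.1 + g m.unpair.2) k : ℝ) * (2:ℝ)^(-(k:ℤ))) :=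
    aux_cc_congr (fun k => (key k).symm) hcauchy
  exact ⟨fun m => f m.unpair.1 + g m.unpair.2, hcomp, aux_isname_mul hf1 hg1, hconv⟩
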